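/- Lemma 1: Let A ∈ ℂ^{N×N} be unitarily similar to a diagonal matrix, i.e., A = W D W† with W unitary and D diagonal. Then the expectation over θ drawn uniformly from [−π, π] satisfies E_θ[ Σ_{j,k} x_j(θ) · A_{jk} · x_k(θ) ] = Tr(A)/N, i.e., E_θ ⟨x(θ), A x(θ)⟩ = Tr(A)/N. -/

import Mathlib

open Real Finset Matrix

/-- The random vector `x(θ) ∈ ℝ^N`: with `n = ⌈log₂ N⌉` and `ω_j = 2^j`,
`x_i(θ) = √(2^n/N) ∏_{j=1}^n cos(ω_j θ)^{1−b_{ij}} sin(ω_j θ)^{b_{ij}}`, where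
`b_{i1}…b_{in}` is the `n`-bit binary representation of `i` (`b_{i1}` most significant). -/
noncomputable def xvec (N : ℕ) (θ : ℝ) (i : Fin N) : ℝ :=
  Real.sqrt ((2 : ℝ) ^ (Nat.clog 2 N) / N) *
    ∏ j ∈ Finset.Icc 1 (Nat.clog 2 N),
      if i.val / 2 ^ (Nat.clog 2 N - j) % 2 = 1
      then Real.sin ((2 : ℝ) ^ j * θ)
      else Real.cos ((2 : ℝ) ^ j * θ)

/-- trig factor: sin if bit true, cos if bit false, as a complex number. -/
noncomputable def Tb (b : Bool) (x : ℝ) : ℂ :=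
  if b then (Real.sin x : ℂ) else (Real.cos x : ℂ)

/-- product of paired trig factors with frequencies `2^j`, `j ∈ [1,n]`. -/
noncomputable def Pp (n : ℕ) (b c : ℕ → Bool) (θ : ℝ) : ℂ :=
  ∏ j ∈ Finset.Icc 1 n, (Tb (b j) ((2:ℝ)^j * θ) * Tb (c j) ((2:ℝ)^j * θ))

noncomputable def al (b c : Bool) : ℂ := if b = c then 1/2 else 0
noncomputable def be (b c : Bool) : ℂ :=
  if b = c then (if b then -(1/4) else 1/4) else -Complex.I/4
noncomputable def ga (b c : Bool) : ℂ :=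
  if b = c then (if b then -(1/4) else 1/4) else Complex.I/4

lemma expI (t : ℝ) : Complex.exp ((t:ℂ) * Complex.I)
    = (Real.cos t : ℂ) + (Real.sin t : ℂ) * Complex.I := by
  rw [Complex.exp_mul_I, ← Complex.ofReal_cos, ← Complex.ofReal_sin]

lemma factor_eq (b c : Bool) (x : ℝ) :
    Tb b x * Tb c x = al b c + be b c * Complex.exp (((2*x : ℝ):ℂ) * Complex.I)
      + ga b c * Complex.exp (((-(2*x) : ℝ):ℂ) * Complex.I) := by
  have hp : Complex.sin (x:ℂ)^2 + Complex.cos (x:ℂ)^2 = 1 := Complex.sin_sq_add_cos_sq _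
  cases b <;> cases c <;>
    simp only [Tb, al, be, ga, if_true, if_false, Bool.false_eq_true, Bool.true_eq_false,
      reduceIte, expI, Real.cos_neg, Real.sin_neg] <;>
    rw [Real.cos_two_mul, Real.sin_two_mul] <;> push_cast
  · ring
  · linear_combination (Complex.sin (x:ℂ) * Complex.cos (x:ℂ)) * Complex.I_sq
  · linear_combination (Complex.sin (x:ℂ) * Complex.cos (x:ℂ)) * Complex.I_sq
  · linear_combination hp

lemma contTb (b : Bool) (a : ℝ) : Continuous (fun θ : ℝ => Tb b (a * θ)) := by
  cases b <;> simp only [Tb] <;> norm_num <;> fun_prop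

lemma contPp (n : ℕ) (b c : ℕ → Bool) : Continuous (Pp n b c) := by
  apply continuous_finset_prod
  exact fun j _ => (contTb _ _).mul (contTb _ _)

lemma contE (m : ℤ) : Continuous (fun θ : ℝ => Complex.exp ((m:ℂ) * (θ:ℂ) * Complex.I)) := by
  fun_prop

noncomputable def Jint (n : ℕ) (b c : ℕ → Bool) (m : ℤ) : ℂ :=
  ∫ θ in (-Real.pi)..Real.pi, Pp n b c θ * Complex.exp ((m:ℂ) * (θ:ℂ) * Complex.I)

lemma intJ (n : ℕ) (b c : ℕ → Bool) (m : ℤ) :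
    IntervalIntegrable (fun θ => Pp n b c θ * Complex.exp ((m:ℂ) * (θ:ℂ) * Complex.I))
      MeasureTheory.volume (-Real.pi) Real.pi :=
  ((contPp n b c).mul (contE m)).intervalIntegrable _ _

lemma J_zero (b c : ℕ → Bool) (m : ℤ) (hm : m ≠ 0) : Jint 0 b c m = 0 := by
  have h1 : ((m:ℂ) * Complex.I) ≠ 0 := by
    simp [Complex.I_ne_zero, hm]
  have h : Jint 0 b c m = ∫ θ in (-Real.pi)..Real.pi,
      Complex.exp (((m:ℂ) * Complex.I) * (θ:ℂ)) := by
    unfold Jint Pp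
    simp only [Finset.Icc_eq_empty_of_lt (by norm_num : (0:ℕ) < 1), Finset.prod_empty, one_mul]
    congr 1; ext θ; ring_nf
  rw [h, integral_exp_mul_complex h1]
  have e1 : (m:ℂ) * Complex.I * (Real.pi:ℂ) = ((m:ℤ):ℂ) * ((Real.pi:ℂ) * Complex.I) := by
    push_cast; ring
  have e2 : (m:ℂ) * Complex.I * ((-Real.pi : ℝ):ℂ) = ((-m:ℤ):ℂ) * ((Real.pi:ℂ) * Complex.I) := by
    push_cast; ring
  rw [e1, e2, Complex.exp_int_mul, Complex.exp_int_mul, Complex.exp_pi_mul_I]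
  have h2 : ((-1 : ℂ)) ^ (-m) = (-1 : ℂ) ^ m := by
    rw [_root_.zpow_neg, ← _root_.inv_zpow, inv_neg, inv_one]
  rw [h2, sub_self, zero_div]

lemma J_step (n : ℕ) (b c : ℕ → Bool) (m : ℤ) :
    Jint (n+1) b c m = al (b (n+1)) (c (n+1)) * Jint n b c m
      + be (b (n+1)) (c (n+1)) * Jint n b c (m + 2^(n+2))
      + ga (b (n+1)) (c (n+1)) * Jint n b c (m - 2^(n+2)) := by
  set b' := b (n+1); set c' := c (n+1)
  have key : ∀ θ : ℝ, Pp (n+1) b c θ * Complex.exp ((m:ℂ) * (θ:ℂ) * Complex.I)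
      = al b' c' * (Pp n b c θ * Complex.exp ((m:ℂ) * (θ:ℂ) * Complex.I))
        + be b' c' * (Pp n b c θ * Complex.exp (((m + 2^(n+2) : ℤ):ℂ) * (θ:ℂ) * Complex.I))
        + ga b' c' * (Pp n b c θ * Complex.exp (((m - 2^(n+2) : ℤ):ℂ) * (θ:ℂ) * Complex.I)) := by
    intro θ
    have hPp : Pp (n+1) b c θ = Pp n b c θ * (Tb b' ((2:ℝ)^(n+1) * θ) * Tb c' ((2:ℝ)^(n+1) * θ)) := by
      unfold Pp
      rw [Finset.prod_Icc_succ_top (by omega : 1 ≤ n + 1)]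
    rw [hPp, factor_eq]
    have eb : Complex.exp (((2 * ((2:ℝ)^(n+1) * θ) : ℝ):ℂ) * Complex.I)
        * Complex.exp ((m:ℂ) * (θ:ℂ) * Complex.I)
        = Complex.exp (((m + 2^(n+2) : ℤ):ℂ) * (θ:ℂ) * Complex.I) := by
      rw [← Complex.exp_add]; congr 1; push_cast; ring
    have eg : Complex.exp (((-(2 * ((2:ℝ)^(n+1) * θ)) : ℝ):ℂ) * Complex.I)
        * Complex.exp ((m:ℂ) * (θ:ℂ) * Complex.I)
        = Complex.exp (((m - 2^(n+2) : ℤ):ℂ) * (θ:ℂ) * Complex.I) := by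
      rw [← Complex.exp_add]; congr 1; push_cast; ring
    calc Pp n b c θ * (al b' c' + be b' c' * Complex.exp (((2 * ((2:ℝ)^(n+1) * θ) : ℝ):ℂ) * Complex.I)
          + ga b' c' * Complex.exp (((-(2 * ((2:ℝ)^(n+1) * θ)) : ℝ):ℂ) * Complex.I))
          * Complex.exp ((m:ℂ) * (θ:ℂ) * Complex.I)
        = al b' c' * (Pp n b c θ * Complex.exp ((m:ℂ) * (θ:ℂ) * Complex.I))
          + be b' c' * (Pp n b c θ * (Complex.exp (((2 * ((2:ℝ)^(n+1) * θ) : ℝ):ℂ) * Complex.I)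
              * Complex.exp ((m:ℂ) * (θ:ℂ) * Complex.I)))
          + ga b' c' * (Pp n b c θ * (Complex.exp (((-(2 * ((2:ℝ)^(n+1) * θ)) : ℝ):ℂ) * Complex.I)
              * Complex.exp ((m:ℂ) * (θ:ℂ) * Complex.I))) := by ring
      _ = _ := by rw [eb, eg]
  unfold Jint
  rw [intervalIntegral.integral_congr (fun θ _ => key θ)]
  rw [intervalIntegral.integral_add (((intJ n b c m).const_mul _).add
        ((intJ n b c (m + 2^(n+2))).const_mul _)) ((intJ n b c (m - 2^(n+2))).const_mul _),
      intervalIntegral.integral_add ((intJ n b c m).const_mul _)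
        ((intJ n b c (m + 2^(n+2))).const_mul _),
      intervalIntegral.integral_const_mul, intervalIntegral.integral_const_mul,
      intervalIntegral.integral_const_mul]

lemma J_high : ∀ (n : ℕ) (b c : ℕ → Bool) (m : ℤ), (2:ℤ)^(n+2) ≤ |m| → Jint n b c m = 0 := by
  intro n
  induction n with
  | zero =>
    intro b c m hm
    apply J_zero b c m
    intro h
    rw [h] at hm
    simp at hm
  | succ n ih =>
    intro b c m hm
    set M : ℤ := 2^(n+2) with hM
    have hMpos : (0:ℤ) < M := by positivity
    have h2M : (2:ℤ)^(n+1+2) = 2 * M := by rw [hM]; ring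
    rw [h2M] at hm
    have h1 : M ≤ |m| := by linarith
    have h2 : M ≤ |m + M| := by
      have e : m = (m + M) + (-M) := by ring
      have tri : |m| ≤ |m + M| + |(-M)| := by
        calc |m| = |(m + M) + (-M)| := by rw [← e]
          _ ≤ |m + M| + |(-M)| := abs_add_le _ _
      rw [abs_neg, abs_of_nonneg hMpos.le] at tri
      linarith
    have h3 : M ≤ |m - M| := by
      have e : m = (m - M) + M := by ring
      have tri : |m| ≤ |m - M| + |M| := by
        calc |m| = |(m - M) + M| := by rw [← e]
          _ ≤ |m - M| + |M| := abs_add_le _ _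
      rw [abs_of_nonneg hMpos.le] at tri
      linarith
    rw [J_step, ih b c m h1, ih b c _ h2, ih b c _ h3]
    ring

lemma J_val : ∀ (n : ℕ) (b c : ℕ → Bool),
    Jint n b c 0 = if (∀ j ∈ Finset.Icc 1 n, b j = c j) then 2 * (Real.pi:ℂ) / 2^n else 0 := by
  intro n
  induction n with
  | zero =>
    intro b c
    rw [if_pos]
    · unfold Jint Pp
      simp only [Finset.Icc_eq_empty_of_lt (by norm_num : (0:ℕ) < 1), Finset.prod_empty, one_mul,
        Int.cast_zero, zero_mul, Complex.exp_zero]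
      rw [intervalIntegral.integral_const, Complex.real_smul]
      push_cast
      ring
    · intro j hj
      simp [Finset.Icc_eq_empty_of_lt (by norm_num : (0:ℕ) < 1)] at hj
  | succ n ih =>
    intro b c
    have hb : (2:ℤ)^(n+2) ≤ |(0:ℤ) + 2^(n+2)| := by
      rw [zero_add, abs_of_nonneg (by positivity : (0:ℤ) ≤ 2^(n+2))]
    have hg : (2:ℤ)^(n+2) ≤ |(0:ℤ) - 2^(n+2)| := by
      rw [zero_sub, abs_neg, abs_of_nonneg (by positivity : (0:ℤ) ≤ 2^(n+2))]
    rw [J_step, J_high n b c _ hb, J_high n b c _ hg, ih b c, mul_zero, mul_zero,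
      add_zero, add_zero]
    by_cases h : b (n+1) = c (n+1)
    · have hcond : (∀ j ∈ Finset.Icc 1 (n+1), b j = c j) ↔ (∀ j ∈ Finset.Icc 1 n, b j = c j) := by
        constructor
        · intro hh j hj
          rcases Finset.mem_Icc.mp hj with ⟨h1, h2⟩
          exact hh j (Finset.mem_Icc.mpr ⟨h1, by omega⟩)
        · intro hh j hj
          rcases Finset.mem_Icc.mp hj with ⟨h1, h2⟩
          rcases Nat.lt_or_ge j (n+1) with h' | h'
          · exact hh j (Finset.mem_Icc.mpr ⟨h1, by omega⟩)
          · have hj' : j = n + 1 := by omega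
            rw [hj']; exact h
      by_cases h2 : ∀ j ∈ Finset.Icc 1 n, b j = c j
      · rw [if_pos h2, if_pos (hcond.mpr h2)]
        simp [al, h]
        ring
      · rw [if_neg h2, if_neg (fun hh => h2 (hcond.mp hh)), mul_zero]
    · have hcond : ¬ (∀ j ∈ Finset.Icc 1 (n+1), b j = c j) := by
        intro hh
        exact h (hh (n+1) (Finset.mem_Icc.mpr ⟨by omega, le_refl _⟩))
      rw [if_neg hcond]
      simp [al, h]

/-- the `l`-th bit (most significant first) of `i` in `n = clog 2 N` bits. -/
def bitN (N i l : ℕ) : Bool := decide (i / 2 ^ (Nat.clog 2 N - l) % 2 = 1)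

lemma bits_inj (N : ℕ) (i k : Fin N)
    (h : ∀ l ∈ Finset.Icc 1 (Nat.clog 2 N), bitN N i.val l = bitN N k.val l) : i = k := by
  set n := Nat.clog 2 N
  have hNle : N ≤ 2 ^ n := Nat.le_pow_clog (by norm_num) N
  have hi : i.val < 2 ^ n := lt_of_lt_of_le i.isLt hNle
  have hk : k.val < 2 ^ n := lt_of_lt_of_le k.isLt hNle
  apply Fin.ext
  apply Nat.eq_of_testBit_eq
  intro s
  rcases Nat.lt_or_ge s n with hs | hs
  · have hmem : n - s ∈ Finset.Icc 1 n := Finset.mem_Icc.mpr ⟨by omega, by omega⟩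
    have h' := h (n - s) hmem
    simp only [bitN] at h'
    have hns : n - (n - s) = s := by omega
    rw [hns] at h'
    rw [Nat.testBit_eq_decide_div_mod_eq, Nat.testBit_eq_decide_div_mod_eq]
    exact h'
  · rw [Nat.testBit_lt_two_pow (lt_of_lt_of_le hi (Nat.pow_le_pow_right (by norm_num) hs)),
        Nat.testBit_lt_two_pow (lt_of_lt_of_le hk (Nat.pow_le_pow_right (by norm_num) hs))]

lemma xvec_mul (N : ℕ) (j k : Fin N) (θ : ℝ) :
    (xvec N θ j : ℂ) * (xvec N θ k : ℂ)
      = (((2:ℝ)^(Nat.clog 2 N) / N : ℝ) : ℂ) * Pp (Nat.clog 2 N) (bitN N j.val) (bitN N k.val) θ := by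
  unfold xvec Pp
  push_cast
  rw [mul_mul_mul_comm, ← Finset.prod_mul_distrib]
  congr 1
  · rw [← Complex.ofReal_mul, Real.mul_self_sqrt (by positivity)]
    push_cast; ring
  · apply Finset.prod_congr rfl
    intro l _
    simp only [Tb, bitN, decide_eq_true_eq]
    by_cases h : (j : ℕ) / 2 ^ (Nat.clog 2 N - l) % 2 = 1 <;>
      by_cases h' : (k : ℕ) / 2 ^ (Nat.clog 2 N - l) % 2 = 1 <;>
      simp [h, h', apply_ite (fun r : ℝ => (r : ℂ))]

lemma contX (N : ℕ) (j : Fin N) : Continuous (fun θ : ℝ => (xvec N θ j : ℂ)) := by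
  unfold xvec
  push_cast
  apply Continuous.mul continuous_const
  apply continuous_finset_prod
  intro l _
  by_cases h : (j : ℕ) / 2 ^ (Nat.clog 2 N - l) % 2 = 1 <;>
    simp only [h, if_true, if_false, reduceIte, apply_ite (fun r : ℝ => (r : ℂ))] <;> fun_prop

set_option maxHeartbeats 1000000 in
theorem stmt_4 (N : ℕ) (hN : 1 ≤ N) (A : Matrix (Fin N) (Fin N) ℂ)
    (W : Matrix (Fin N) (Fin N) ℂ) (D : Fin N → ℂ)
    (hW : W ∈ Matrix.unitaryGroup (Fin N) ℂ)
    (hA : A = W * Matrix.diagonal D * Wᴴ) :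
    (2 * Real.pi)⁻¹ •
        (∫ θ in (-Real.pi)..Real.pi,
          ∑ j, ∑ k, (xvec N θ j : ℂ) * A j k * (xvec N θ k : ℂ)) = A.trace / N := by
  set n := Nat.clog 2 N with hn
  have hNne : ((N:ℂ)) ≠ 0 := Nat.cast_ne_zero.mpr (by omega)
  have h2n : ((2:ℂ)^n) ≠ 0 := pow_ne_zero _ (by norm_num)
  have hπ : ((Real.pi : ℝ):ℂ) ≠ 0 := Complex.ofReal_ne_zero.mpr Real.pi_ne_zero
  -- integrability of each summand
  have hInt : ∀ j k : Fin N, IntervalIntegrable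
      (fun θ => (xvec N θ j : ℂ) * A j k * (xvec N θ k : ℂ))
      MeasureTheory.volume (-Real.pi) Real.pi := by
    intro j k
    exact (((contX N j).mul continuous_const).mul (contX N k)).intervalIntegrable _ _
  -- swap integral and sums
  have hswap : (∫ θ in (-Real.pi)..Real.pi,
        ∑ j, ∑ k, (xvec N θ j : ℂ) * A j k * (xvec N θ k : ℂ))
      = ∑ j, ∑ k, ∫ θ in (-Real.pi)..Real.pi,
        (xvec N θ j : ℂ) * A j k * (xvec N θ k : ℂ) := by
    calc (∫ θ in (-Real.pi)..Real.pi,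
          ∑ j, ∑ k, (xvec N θ j : ℂ) * A j k * (xvec N θ k : ℂ))
        = ∑ j, ∫ θ in (-Real.pi)..Real.pi,
            ∑ k, (xvec N θ j : ℂ) * A j k * (xvec N θ k : ℂ) :=
          intervalIntegral.integral_finset_sum
            (f := fun j θ => ∑ k, ((xvec N θ j : ℂ) * A j k * (xvec N θ k : ℂ)))
            (fun j _ => (continuous_finset_sum _ (fun k _ =>
              ((contX N j).mul continuous_const).mul (contX N k))).intervalIntegrable _ _)
      _ = ∑ j, ∑ k, ∫ θ in (-Real.pi)..Real.pi,
            (xvec N θ j : ℂ) * A j k * (xvec N θ k : ℂ) :=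
          Finset.sum_congr rfl fun j _ =>
            intervalIntegral.integral_finset_sum
              (f := fun k θ => ((xvec N θ j : ℂ) * A j k * (xvec N θ k : ℂ)))
              (fun k _ => hInt j k)
  -- each inner integral
  have hval : ∀ j k : Fin N, (∫ θ in (-Real.pi)..Real.pi,
        (xvec N θ j : ℂ) * A j k * (xvec N θ k : ℂ))
      = if j = k then A j j * (2 * (Real.pi:ℂ) / N) else 0 := by
    intro j k
    have step1 : (∫ θ in (-Real.pi)..Real.pi, (xvec N θ j : ℂ) * A j k * (xvec N θ k : ℂ))
        = A j k * ((((2:ℝ)^n / N : ℝ) : ℂ) * Jint n (bitN N j.val) (bitN N k.val) 0) := by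
      have hpt : ∀ θ : ℝ, (xvec N θ j : ℂ) * A j k * (xvec N θ k : ℂ)
          = A j k * ((((2:ℝ)^n / N : ℝ) : ℂ) *
            (Pp n (bitN N j.val) (bitN N k.val) θ
              * Complex.exp (((0:ℤ):ℂ) * (θ:ℂ) * Complex.I))) := by
        intro θ
        rw [show ((xvec N θ j : ℂ) * A j k * (xvec N θ k : ℂ))
            = A j k * ((xvec N θ j : ℂ) * (xvec N θ k : ℂ)) by ring, xvec_mul]
        simp only [Int.cast_zero, zero_mul, Complex.exp_zero, mul_one]
        rfl
      rw [intervalIntegral.integral_congr (fun θ _ => hpt θ),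
        intervalIntegral.integral_const_mul, intervalIntegral.integral_const_mul]
      simp only [Jint]
    rw [step1, J_val]
    by_cases h : j = k
    · subst h
      rw [if_pos (fun l _ => rfl), if_pos rfl]
      have harith : ((((2:ℝ)^n / N : ℝ)) : ℂ) * (2 * (Real.pi:ℂ) / 2^n)
          = 2 * (Real.pi:ℂ) / N := by
        push_cast
        field_simp
      rw [harith]
    · rw [if_neg h, if_neg, mul_zero, mul_zero]
      intro hall
      exact h (bits_inj N j k hall)
  rw [hswap]
  rw [Finset.sum_congr rfl fun j _ => Finset.sum_congr rfl fun k _ => hval j k]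
  have hsum : ∑ j : Fin N, ∑ k : Fin N, (if j = k then A j j * (2 * (Real.pi:ℂ) / N) else 0)
      = A.trace * (2 * (Real.pi:ℂ) / N) := by
    have htr : A.trace = ∑ j, A j j := rfl
    rw [htr, Finset.sum_mul]
    refine Finset.sum_congr rfl fun j _ => ?_
    rw [Finset.sum_ite_eq Finset.univ j (fun _ => A j j * (2 * (Real.pi:ℂ) / N))]
    simp
  rw [hsum, Complex.real_smul]
  push_cast
  field_simp
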